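/- For every pair of incompatible table types Table(σ₁) and Table(σ₂), there exists a base type interpolant: a table type T such that (1) Table(σ₁) <: T, (2) T is not compatible with Table(σ₂), and (3) every table type T' with T <: T' and T' ≠ T is compatible with Table(σ₂). Moreover, T can be chosen to be a single-column table type Table({c : ι}), where c is a shared column witnessing the incompatibility of σ₁ and σ₂ and ι is a column-type interpolant for σ₁(c) and σ₂(c). -/

import Mathlib

/-- Column types in the refinement type system. -/
inductive ColTy where
  | top | quantitative | qualitative | discrete | continuous
  | nominal | ordinal | temporal
deriving DecidableEq

/-- The subtyping axioms on column types. -/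
inductive ColSubAx : ColTy → ColTy → Prop where
  | quant_top : ColSubAx .quantitative .top
  | qual_top  : ColSubAx .qualitative .top
  | disc_quant : ColSubAx .discrete .quantitative
  | cont_quant : ColSubAx .continuous .quantitative
  | nom_qual  : ColSubAx .nominal .qualitative
  | ord_qual  : ColSubAx .ordinal .qualitative
  | temp_qual : ColSubAx .temporal .qualitative

/-- Column subtyping: the reflexive-transitive closure of the axioms. -/
def ColSub : ColTy → ColTy → Prop := Relation.ReflTransGen ColSubAx

/-- Two column types are compatible iff one is a subtype of the other. -/
def ColCompat (β₁ β₂ : ColTy) : Prop := ColSub β₁ β₂ ∨ ColSub β₂ β₁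

/-- A schema is a finite partial map from column names to column types. -/
abbrev Schema := Finmap (fun _ : String => ColTy)

/-- Table subtyping (a table type `Table σ` is determined by its schema `σ`;
    since `Finmap` is quotiented by permutation, the permutation rule is implicit). -/
inductive TableSub : Schema → Schema → Prop where
  | width (σ₁ σ₂ : Schema) :
      (∀ c τ, σ₂.lookup c = some τ → σ₁.lookup c = some τ) → TableSub σ₁ σ₂
  | depth (σ₁ σ₂ : Schema) :
      σ₁.keys = σ₂.keys →
      (∀ c τ₁ τ₂, σ₁.lookup c = some τ₁ → σ₂.lookup c = some τ₂ → ColSub τ₁ τ₂) →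
      TableSub σ₁ σ₂
  | trans {σ₁ σ₂ σ₃ : Schema} : TableSub σ₁ σ₂ → TableSub σ₂ σ₃ → TableSub σ₁ σ₃

/-- Table compatibility: every shared column's types are compatible. -/
def TableCompat (σ₁ σ₂ : Schema) : Prop :=
  ∀ c τ₁ τ₂, σ₁.lookup c = some τ₁ → σ₂.lookup c = some τ₂ → ColCompat τ₁ τ₂

instance : Fintype ColTy where
  elems := {.top, .quantitative, .qualitative, .discrete, .continuous, .nominal, .ordinal, .temporal}
  complete := by intro x; cases x <;> simp

def colLE : ColTy → ColTy → Bool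
  | a, b =>
    a = b ||
    (match a, b with
     | .quantitative, .top => true
     | .qualitative, .top => true
     | .discrete, .quantitative => true | .discrete, .top => true
     | .continuous, .quantitative => true | .continuous, .top => true
     | .nominal, .qualitative => true | .nominal, .top => true
     | .ordinal, .qualitative => true | .ordinal, .top => true
     | .temporal, .qualitative => true | .temporal, .top => true
     | _, _ => false)

lemma colLE_trans : ∀ a b c : ColTy, colLE a b → colLE b c → colLE a c := by decide

lemma ax_colLE {a b : ColTy} (h : ColSubAx a b) : colLE a b := by cases h <;> rfl

lemma colSub_iff {a b : ColTy} : ColSub a b ↔ colLE a b = true := by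
  constructor
  · intro h
    induction h with
    | refl => cases a <;> rfl
    | tail _ ax ih => exact colLE_trans _ _ _ ih (ax_colLE ax)
  · intro h
    cases a <;> cases b <;> simp [colLE] at h <;>
      first
      | exact Relation.ReflTransGen.refl
      | exact Relation.ReflTransGen.single ColSubAx.quant_top
      | exact Relation.ReflTransGen.single ColSubAx.qual_top
      | exact Relation.ReflTransGen.single ColSubAx.disc_quant
      | exact Relation.ReflTransGen.single ColSubAx.cont_quant
      | exact Relation.ReflTransGen.single ColSubAx.nom_qual
      | exact Relation.ReflTransGen.single ColSubAx.ord_qual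
      | exact Relation.ReflTransGen.single ColSubAx.temp_qual
      | exact (Relation.ReflTransGen.single ColSubAx.disc_quant).tail ColSubAx.quant_top
      | exact (Relation.ReflTransGen.single ColSubAx.cont_quant).tail ColSubAx.quant_top
      | exact (Relation.ReflTransGen.single ColSubAx.nom_qual).tail ColSubAx.qual_top
      | exact (Relation.ReflTransGen.single ColSubAx.ord_qual).tail ColSubAx.qual_top
      | exact (Relation.ReflTransGen.single ColSubAx.temp_qual).tail ColSubAx.qual_top

def colCompatB (a b : ColTy) : Bool := colLE a b || colLE b a

lemma colCompat_iff {a b : ColTy} : ColCompat a b ↔ colCompatB a b = true := by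
  simp [ColCompat, colCompatB, colSub_iff]

lemma key_bool : ∀ τ₁ τ₂ : ColTy, ¬ colCompatB τ₁ τ₂ = true →
    ∃ ι : ColTy, colLE τ₁ ι = true ∧ ¬ colCompatB ι τ₂ = true ∧
      ∀ β' : ColTy, colLE ι β' = true → β' ≠ ι → colCompatB β' τ₂ = true := by decide

lemma key : ∀ τ₁ τ₂ : ColTy, ¬ ColCompat τ₁ τ₂ →
    ∃ ι : ColTy, ColSub τ₁ ι ∧ ¬ ColCompat ι τ₂ ∧
      ∀ β' : ColTy, ColSub ι β' → β' ≠ ι → ColCompat β' τ₂ := by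
  intro τ₁ τ₂ h
  rw [colCompat_iff] at h
  obtain ⟨ι, h1, h2, h3⟩ := key_bool τ₁ τ₂ h
  exact ⟨ι, colSub_iff.mpr h1, fun hc => h2 (colCompat_iff.mp hc),
    fun β' hs hne => colCompat_iff.mpr (h3 β' (colSub_iff.mp hs) hne)⟩

lemma lookup_singleton' {c x : String} {ι τ : ColTy}
    (h : (Finmap.singleton (β := fun _ : String => ColTy) c ι).lookup x = some τ) :
    x = c ∧ τ = ι := by
  by_cases hx : x = c
  · subst hx
    rw [Finmap.lookup_singleton_eq] at h
    exact ⟨rfl, (Option.some_injective _ h).symm⟩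
  · rw [Finmap.lookup_eq_none.mpr (by simp [Finmap.mem_singleton, hx])] at h
    exact absurd h (by simp)

lemma invariant {c : String} {ι : ColTy} {σ' : Finmap (fun _ : String => ColTy)}
    (h : TableSub (Finmap.singleton c ι) σ') :
    ∀ x τ, σ'.lookup x = some τ → x = c ∧ ColSub ι τ := by
  have base : ∀ x τ, (Finmap.singleton (β := fun _ : String => ColTy) c ι).lookup x = some τ → x = c ∧ ColSub ι τ :=
    fun x τ hx => ⟨(lookup_singleton' hx).1, (lookup_singleton' hx).2 ▸ Relation.ReflTransGen.refl⟩
  generalize hσ : Finmap.singleton (β := fun _ : String => ColTy) c ι = σ₀ at h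
  rw [hσ] at base; clear hσ
  induction h with
  | width σa σb hw => exact fun x τ hx => base x τ (hw x τ hx)
  | depth σa σb hk hd =>
      intro x τ hx
      have hmem : x ∈ σb := Finmap.lookup_isSome.mp (by rw [hx]; rfl)
      have hmem' : x ∈ σa := by
        rw [← Finmap.mem_keys, ← hk, Finmap.mem_keys] at hmem; exact hmem
      obtain ⟨τa, hτa⟩ := Option.isSome_iff_exists.mp (Finmap.lookup_isSome.mpr hmem')
      obtain ⟨hxc, hsub⟩ := base x τa hτa
      exact ⟨hxc, hsub.trans (hd x τa τ hτa hx)⟩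
  | trans h1 h2 ih1 ih2 => exact ih2 (ih1 base)


/-- Every pair of incompatible table types has a base type interpolant, which can be
    chosen as a single-column table whose column type is a column-type interpolant for
    a shared column witnessing the incompatibility. -/
theorem exists_table_interpolant (σ₁ σ₂ : Schema) (h : ¬ TableCompat σ₁ σ₂) :
    ∃ σ : Schema,
      TableSub σ₁ σ ∧
      ¬ TableCompat σ σ₂ ∧
      (∀ σ' : Schema, TableSub σ σ' → σ' ≠ σ → TableCompat σ' σ₂) ∧
      -- Moreover, σ can be chosen to be a single-column table type Table({c : ι}):
      (∃ (c : String) (ι τ₁ τ₂ : ColTy),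
        σ = Finmap.singleton c ι ∧
        σ₁.lookup c = some τ₁ ∧ σ₂.lookup c = some τ₂ ∧ ¬ ColCompat τ₁ τ₂ ∧
        ColSub τ₁ ι ∧ ¬ ColCompat ι τ₂ ∧
        (∀ β' : ColTy, ColSub ι β' → β' ≠ ι → ColCompat β' τ₂)) := by
  simp only [TableCompat, not_forall] at h
  obtain ⟨c, τ₁, τ₂, h1, h2, hnc⟩ := h
  obtain ⟨ι, hsub, hincompat, hmax⟩ := key τ₁ τ₂ hnc
  refine ⟨Finmap.singleton c ι, ?_, ?_, ?_, c, ι, τ₁, τ₂, rfl, h1, h2, hnc, hsub, hincompat, hmax⟩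
  · -- TableSub σ₁ (singleton c ι)
    refine TableSub.trans (σ₂ := Finmap.singleton c τ₁) (TableSub.width _ _ ?_) (TableSub.depth _ _ ?_ ?_)
    · intro x τ hx
      obtain ⟨hxc, hτ⟩ := lookup_singleton' hx
      subst hxc; subst hτ; exact h1
    · simp [Finmap.keys_singleton]
    · intro x τa τb ha hb
      obtain ⟨hxc, hτa⟩ := lookup_singleton' ha
      obtain ⟨_, hτb⟩ := lookup_singleton' hb
      subst hτa; subst hτb; exact hsub
  · intro hc
    exact hincompat (hc c ι τ₂ Finmap.lookup_singleton_eq h2)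
  · intro σ' hts hne
    have inv := invariant hts
    intro x τa τb ha hb
    obtain ⟨hxc, hιa⟩ := inv x τa ha
    subst hxc
    have hτb : τb = τ₂ := Option.some_injective _ (hb.symm.trans h2)
    subst hτb
    by_cases hτι : τa = ι
    · exfalso; apply hne
      apply Finmap.ext_lookup
      intro y
      by_cases hy : y = x
      · subst hy; rw [Finmap.lookup_singleton_eq, ha, hτι]
      · have hnone : Finmap.lookup y (Finmap.singleton (β := fun _ : String => ColTy) x ι) = none :=
          Finmap.lookup_eq_none.mpr (fun hmem => hy ((Finmap.mem_singleton y x ι).mp hmem))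
        rw [hnone]
        cases hEq : σ'.lookup y with
        | none => rfl
        | some τ' => exact absurd (inv y τ' hEq).1 hy
    · exact hmax τa hιa hτι
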